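/- A solid path in a partial staircase L is non-kissing with every other monotone lattice path contained in L; equivalently, the corresponding solid subset is non-crossing with every element of 2^[m]_L. -/

import Mathlib

open Finset

/-- Pairs `{u<v}` and `{x<y}` (values in `ℕ ∪ {∞}`) are non-nesting if
neither `x<u<v<y` nor `u<x<y<v`. -/
def PairNonNesting (u v x y : WithTop ℕ) : Prop :=
  ¬ (x < u ∧ u < v ∧ v < y) ∧ ¬ (u < x ∧ x < y ∧ y < v)

/-- Pairs `{u<v}` and `{x<y}` are non-crossing if neither `x<u<y<v` nor `u<x<v<y`. -/
def PairNonCrossing (u v x y : WithTop ℕ) : Prop :=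
  ¬ (x < u ∧ u < y ∧ y < v) ∧ ¬ (u < x ∧ x < v ∧ v < y)

/-- Remove one common entry (equal entries in equal positions) from the two lists. -/
def stripOnce (I J : List ℕ) : Option (List ℕ × List ℕ) :=
  ((List.range (min I.length J.length)).find? (fun s => I.getD s 0 == J.getD s 0)).map
    (fun s => (I.eraseIdx s, J.eraseIdx s))

def stripAux : ℕ → List ℕ → List ℕ → List ℕ × List ℕ
  | 0, I, J => (I, J)
  | n+1, I, J =>
    match stripOnce I J with
    | none => (I, J)
    | some (I', J') => stripAux n I' J'

/-- Repeatedly remove the "common part" (equal entries in equal positions). -/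
def strip (I J : List ℕ) : List ℕ × List ℕ := stripAux I.length I J

/-- The `s`-th entry (0-indexed) of the list, viewed in `ℕ ∪ {∞}`, with `∞` beyond the end. -/
def entry (l : List ℕ) (s : ℕ) : WithTop ℕ :=
  (l.map (fun a => (a : WithTop ℕ))).getD s ⊤

/-- Non-nesting condition on sorted lists `I`, `J` with `I` the shorter one:
after removing the common part, all consecutive-difference pairs are non-nesting
(with the `∞` convention for the shorter list). -/
def ListsNonNesting (I J : List ℕ) : Prop :=
  ∀ s : ℕ, s + 1 < (strip I J).2.length →
    PairNonNesting (entry (strip I J).1 s) (entry (strip I J).1 (s+1))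
      (entry (strip I J).2 s) (entry (strip I J).2 (s+1))

def ListsNonCrossing (I J : List ℕ) : Prop :=
  ∀ s : ℕ, s + 1 < (strip I J).2.length →
    PairNonCrossing (entry (strip I J).1 s) (entry (strip I J).1 (s+1))
      (entry (strip I J).2 s) (entry (strip I J).2 (s+1))

/-- The increasing list of elements of a finite set. -/
def sortedList (I : Finset ℕ) : List ℕ := I.sort (· ≤ ·)

/-- Subsets `I`, `J` are non-nesting. -/
def SetsNonNesting (I J : Finset ℕ) : Prop :=
  if I.card ≤ J.card then ListsNonNesting (sortedList I) (sortedList J)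
  else ListsNonNesting (sortedList J) (sortedList I)

/-- Subsets `I`, `J` are non-crossing. -/
def SetsNonCrossing (I J : Finset ℕ) : Prop :=
  if I.card ≤ J.card then ListsNonCrossing (sortedList I) (sortedList J)
  else ListsNonCrossing (sortedList J) (sortedList I)

/-- `A ≺ B`: every element of `A` is smaller than every element of `B`. -/
def Precedes (A B : Finset ℕ) : Prop := ∀ a ∈ A, ∀ b ∈ B, a < b

/-- Leclerc–Zelevinsky weak separation. -/
def WeaklySeparated (I J : Finset ℕ) : Prop :=
  (J.card ≤ I.card ∧ ∃ J₁ J₂ : Finset ℕ, Disjoint J₁ J₂ ∧ J \ I = J₁ ∪ J₂ ∧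
    Precedes J₁ (I \ J) ∧ Precedes (I \ J) J₂) ∨
  (I.card ≤ J.card ∧ ∃ I₁ I₂ : Finset ℕ, Disjoint I₁ I₂ ∧ I \ J = I₁ ∪ I₂ ∧
    Precedes I₁ (J \ I) ∧ Precedes (J \ I) I₂)

/-- Number of north steps of the path `p(I)` among its first `k` steps. -/
def northCount (I : Finset ℕ) (k : ℕ) : ℕ := (I.filter (fun i => i ≤ k)).card

/-- Paths `p(I)`, `p(J)` are non-crossing: one lies weakly northwest of the other
along their entire length. -/
def PathsNonCrossing (I J : Finset ℕ) : Prop :=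
  (∀ k, northCount J k ≤ northCount I k) ∨ (∀ k, northCount I k ≤ northCount J k)

/-- `[k₁, k₂]` (in step coordinates) is a proper common part of the paths `p(I)`, `p(J)`
of length `m`: a maximal shared connected subpath containing neither the source nor an
endpoint.  Maximality is expressed by the two paths separating just before `k₁` and just
after `k₂`. -/
def ProperCommonPart (m : ℕ) (I J : Finset ℕ) (k₁ k₂ : ℕ) : Prop :=
  1 ≤ k₁ ∧ k₁ ≤ k₂ ∧ k₂ < m ∧
  (∀ k, k₁ ≤ k → k ≤ k₂ → northCount I k = northCount J k) ∧
  northCount I (k₁ - 1) ≠ northCount J (k₁ - 1) ∧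
  northCount I (k₂ + 1) ≠ northCount J (k₂ + 1)

/-- Paths `p(I)`, `p(J)` are non-kissing: at every proper common part each path leaves
in the same direction in which it entered (the common part is a crossing, not a kiss). -/
def PathsNonKissing (m : ℕ) (I J : Finset ℕ) : Prop :=
  ∀ k₁ k₂, ProperCommonPart m I J k₁ k₂ → ((k₁ ∈ I) ↔ (k₂ + 1 ∈ I))

/-- Number of north steps among the first `k` steps, for `k ∈ ℤ` (zero for `k ≤ 0`). -/
def northCountZ (I : Finset ℕ) (k : ℤ) : ℤ := (northCount I k.toNat : ℤ)

/-- The indicator Gelfand–Tsetlin pattern of the path `p(I)`: the cell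
`[x,x+1] × [y,y+1]` gets a `1` if it lies southeast of the path and `0` if northwest. -/
noncomputable def Tpat (I : Finset ℕ) (x y : ℤ) : ℝ :=
  if y + 1 ≤ northCountZ I (x + y + 1) then 1 else 0

/-- `(x,y)` is a node of the partial staircase `L ⊆ L_m` with set of sink heights `A`:
it lies (weakly) southwest of some sink `(m-j, j)`, `j ∈ A`. -/
def NodeL (m : ℕ) (A : Finset ℕ) (x y : ℤ) : Prop :=
  0 ≤ x ∧ 0 ≤ y ∧ ∃ j ∈ A, x + j ≤ m ∧ y ≤ j

/-- Same, with natural-number coordinates. -/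
def InL (m : ℕ) (A : Finset ℕ) (x y : ℕ) : Prop :=
  ∃ j ∈ A, x + j ≤ m ∧ y ≤ j

/-- The path `p(I)` is contained in the partial staircase with sink heights `A`. -/
def PathInL (m : ℕ) (A : Finset ℕ) (I : Finset ℕ) : Prop :=
  ∀ k ≤ m, InL m A (k - northCount I k) (northCount I k)

/-- A critical node has edges of `L` leaving it toward both the north and the east. -/
def CriticalNode (m : ℕ) (A : Finset ℕ) (x y : ℕ) : Prop :=
  InL m A (x + 1) y ∧ InL m A x (y + 1)

open Classical in
/-- `N(L)`: the number of critical nodes of the partial staircase. -/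
noncomputable def numCritical (m : ℕ) (A : Finset ℕ) : ℕ :=
  ((Finset.range (m+1) ×ˢ Finset.range (m+1)).filter
    (fun p => CriticalNode m A p.1 p.2)).card

/-- A solid path in `L`: it either moves east (possibly zero distance), then north
until it cannot do so any longer, then east (possibly zero distance) to a sink; or
moves north (possibly zero distance), then east until it cannot do so any longer,
then north (possibly zero distance) to a sink.  The subset records the positions of
the north steps. -/
def Solid (m : ℕ) (A : Finset ℕ) (I : Finset ℕ) : Prop :=
  (∃ a b, a + b ≤ m ∧ I = Finset.Icc (a+1) (a+b) ∧ ¬ InL m A a (b+1)) ∨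
  (∃ a b, a + b ≤ m ∧ I = Finset.Icc 1 a ∪ Finset.Icc (a+b+1) m ∧ ¬ InL m A (b+1) a)


/-! ### Auxiliary lemmas -/

lemma getD_eraseIdx (l : List ℕ) (i j : ℕ) :
    (l.eraseIdx i).getD j 0 = if j < i then l.getD j 0 else l.getD (j+1) 0 := by
  simp only [List.getD_eq_getElem?_getD, List.getElem?_eraseIdx]
  split <;> rfl

lemma entry_eq (l : List ℕ) (s : ℕ) :
    entry l s = if s < l.length then ((l.getD s 0 : ℕ) : WithTop ℕ) else ⊤ := by
  induction l generalizing s with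
  | nil => simp [entry]
  | cons x xs ih =>
    cases s with
    | zero => simp [entry]
    | succ n =>
      have h : entry (x :: xs) (n+1) = entry xs n := by simp [entry]
      rw [h, ih]
      simp [Nat.succ_lt_succ_iff]

lemma stripOnce_some {P Q P₁ Q₁ : List ℕ} (h : stripOnce P Q = some (P₁, Q₁)) :
    ∃ s, s < min P.length Q.length ∧ P.getD s 0 = Q.getD s 0 ∧
      P₁ = P.eraseIdx s ∧ Q₁ = Q.eraseIdx s := by
  unfold stripOnce at h
  cases hf : (List.range (min P.length Q.length)).find? (fun s => P.getD s 0 == Q.getD s 0) with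
  | none => rw [hf] at h; simp at h
  | some s =>
    rw [hf] at h
    simp only [Option.map_some, Option.some.injEq, Prod.mk.injEq] at h
    refine ⟨s, ?_, ?_, h.1.symm, h.2.symm⟩
    · have := List.mem_of_find?_eq_some hf; simpa using this
    · have := List.find?_some hf; simpa using this

lemma stripAux_spec : ∀ (n : ℕ) (P Q : List ℕ), ∃ (c : ℕ) (f : ℕ → ℕ),
    c ≤ min P.length Q.length ∧ StrictMono f ∧
    (stripAux n P Q).1.length = P.length - c ∧
    (stripAux n P Q).2.length = Q.length - c ∧
    (∀ s, f s < P.length ↔ s < P.length - c) ∧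
    (∀ s, f s < Q.length ↔ s < Q.length - c) ∧
    (∀ s, (stripAux n P Q).1.getD s 0 = P.getD (f s) 0) ∧
    (∀ s, (stripAux n P Q).2.getD s 0 = Q.getD (f s) 0) ∧
    (∀ s t, f s < t → t < f (s+1) →
      (P.getD t 0 = Q.getD t 0 ∧ t < P.length ∧ t < Q.length)) := by
  intro n
  induction n with
  | zero =>
    intro P Q
    exact ⟨0, id, by omega, strictMono_id, by simp [stripAux], by simp [stripAux],
      by simp, by simp, by simp [stripAux], by simp [stripAux],
      fun s t h1 h2 => absurd h2 (by simp at h1 ⊢; omega)⟩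
  | succ n ih =>
    intro P Q
    rcases hso : stripOnce P Q with _ | ⟨P₁, Q₁⟩
    · refine ⟨0, id, by omega, strictMono_id, ?_, ?_, by simp, by simp, ?_, ?_,
        fun s t h1 h2 => absurd h2 (by simp at h1 ⊢; omega)⟩ <;>
        simp [stripAux, hso]
    · obtain ⟨s₀, hs₀min, hs₀eq, hp, hq⟩ := stripOnce_some hso
      subst hp; subst hq
      have hstep : stripAux (n+1) P Q = stripAux n (P.eraseIdx s₀) (Q.eraseIdx s₀) := by
        simp [stripAux, hso]
      obtain ⟨c, f, hc, hf, hl1, hl2, hi1, hi2, hg1, hg2, hmid⟩ :=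
        ih (P.eraseIdx s₀) (Q.eraseIdx s₀)
      have hs₀P : s₀ < P.length := by omega
      have hs₀Q : s₀ < Q.length := by omega
      have lP : (P.eraseIdx s₀).length = P.length - 1 := by
        rw [List.length_eraseIdx]; simp [hs₀P]
      have lQ : (Q.eraseIdx s₀).length = Q.length - 1 := by
        rw [List.length_eraseIdx]; simp [hs₀Q]
      set g : ℕ → ℕ := fun t => if t < s₀ then t else t + 1 with hg
      have gmono : StrictMono g := by
        intro x y hxy; simp only [hg]; split <;> split <;> omega
      have gP : ∀ x, g x < P.length ↔ x < P.length - 1 := by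
        intro x; simp only [hg]; split <;> omega
      have gQ : ∀ x, g x < Q.length ↔ x < Q.length - 1 := by
        intro x; simp only [hg]; split <;> omega
      have gtrP : ∀ j, (P.eraseIdx s₀).getD j 0 = P.getD (g j) 0 := by
        intro j; rw [getD_eraseIdx]; simp only [hg]; split <;> rfl
      have gtrQ : ∀ j, (Q.eraseIdx s₀).getD j 0 = Q.getD (g j) 0 := by
        intro j; rw [getD_eraseIdx]; simp only [hg]; split <;> rfl
      simp only [lP, lQ] at hc hl1 hl2 hi1 hi2
      refine ⟨c + 1, g ∘ f, by omega, gmono.comp hf, ?_, ?_, ?_, ?_, ?_, ?_, ?_⟩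
      · rw [hstep, hl1]; omega
      · rw [hstep, hl2]; omega
      · intro s; rw [Function.comp_apply, gP]
        constructor
        · intro h; have := (hi1 s).mp h; omega
        · intro h; exact (hi1 s).mpr (by omega)
      · intro s; rw [Function.comp_apply, gQ]
        constructor
        · intro h; have := (hi2 s).mp h; omega
        · intro h; exact (hi2 s).mpr (by omega)
      · intro s; rw [hstep, hg1 s, gtrP]; rfl
      · intro s; rw [hstep, hg2 s, gtrQ]; rfl
      · intro s t h1 h2
        simp only [Function.comp_apply] at h1 h2
        by_cases hts : t = s₀
        · subst hts; exact ⟨hs₀eq, hs₀P, hs₀Q⟩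
        · set t' : ℕ := if t < s₀ then t else t - 1 with ht'
          have hgt' : g t' = t := by
            simp only [hg, ht']; split <;> (try split) <;> omega
          have h1' : f s < t' := by
            have : g (f s) < g t' := by rw [hgt']; exact h1
            exact gmono.lt_iff_lt.mp this
          have h2' : t' < f (s+1) := by
            have : g t' < g (f (s+1)) := by rw [hgt']; exact h2
            exact gmono.lt_iff_lt.mp this
          obtain ⟨heq, hlp, hlq⟩ := hmid s t' h1' h2'
          rw [lP] at hlp; rw [lQ] at hlq
          have htle : t ≤ t' + 1 := by simp only [ht']; split <;> omega
          refine ⟨?_, by omega, by omega⟩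
          rw [← hgt', ← gtrP, ← gtrQ]; exact heq

lemma strip_spec (P Q : List ℕ) : ∃ (c : ℕ) (f : ℕ → ℕ),
    c ≤ min P.length Q.length ∧ StrictMono f ∧
    (∀ s, f s < P.length ↔ s < P.length - c) ∧
    (∀ s, f s < Q.length ↔ s < Q.length - c) ∧
    (strip P Q).2.length = Q.length - c ∧
    (∀ s, entry (strip P Q).1 s =
      if s < P.length - c then ((P.getD (f s) 0 : ℕ) : WithTop ℕ) else ⊤) ∧
    (∀ s, entry (strip P Q).2 s =
      if s < Q.length - c then ((Q.getD (f s) 0 : ℕ) : WithTop ℕ) else ⊤) ∧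
    (∀ s t, f s < t → t < f (s+1) →
      (P.getD t 0 = Q.getD t 0 ∧ t < P.length ∧ t < Q.length)) := by
  unfold strip
  obtain ⟨c, f, hc, hf, hl1, hl2, hi1, hi2, hg1, hg2, hmid⟩ := stripAux_spec P.length P Q
  refine ⟨c, f, hc, hf, hi1, hi2, hl2, ?_, ?_, hmid⟩
  · intro s; rw [entry_eq, hg1 s, hl1]
  · intro s; rw [entry_eq, hg2 s, hl2]

/-! ### sorted list and northCount lemmas -/

lemma sortedList_length (I : Finset ℕ) : (sortedList I).length = I.card :=
  Finset.length_sort _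

lemma sortedList_mem {I : Finset ℕ} {t : ℕ} (ht : t < I.card) : (sortedList I).getD t 0 ∈ I := by
  have h : t < (sortedList I).length := by rw [sortedList_length]; exact ht
  rw [List.getD_eq_getElem _ _ h]
  have := List.getElem_mem h
  unfold sortedList at this
  rwa [Finset.mem_sort] at this

lemma sortedList_lt {I : Finset ℕ} {s t : ℕ} (hst : s < t) (ht : t < I.card) :
    (sortedList I).getD s 0 < (sortedList I).getD t 0 := by
  have h2 : t < (sortedList I).length := by rw [sortedList_length]; exact ht
  have h1 : s < (sortedList I).length := lt_trans hst h2
  rw [List.getD_eq_getElem _ _ h1, List.getD_eq_getElem _ _ h2]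
  exact (Finset.sortedLT_sort I).getElem_lt_getElem_of_lt hst

lemma sortedList_le {I : Finset ℕ} {s t : ℕ} (hst : s ≤ t) (ht : t < I.card) :
    (sortedList I).getD s 0 ≤ (sortedList I).getD t 0 := by
  rcases eq_or_lt_of_le hst with rfl | h
  · exact le_rfl
  · exact le_of_lt (sortedList_lt h ht)

lemma sortedList_lb {m : ℕ} {I : Finset ℕ} (hI : I ⊆ Finset.Icc 1 m) :
    ∀ {t : ℕ}, t < I.card → t + 1 ≤ (sortedList I).getD t 0 := by
  intro t
  induction t with
  | zero =>
    intro h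
    have := Finset.mem_Icc.mp (hI (sortedList_mem h))
    omega
  | succ n ih =>
    intro h
    have h1 : (sortedList I).getD n 0 < (sortedList I).getD (n+1) 0 :=
      sortedList_lt (by omega) h
    have h2 := ih (by omega)
    omega

lemma sortedList_ub {m : ℕ} {I : Finset ℕ} (hI : I ⊆ Finset.Icc 1 m) {t : ℕ}
    (ht : t < I.card) : (sortedList I).getD t 0 ≤ m :=
  (Finset.mem_Icc.mp (hI (sortedList_mem ht))).2

lemma nc_succ (I : Finset ℕ) (k : ℕ) :
    northCount I (k+1) = northCount I k + if k+1 ∈ I then 1 else 0 := by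
  unfold northCount
  have hsplit : I.filter (fun i => i ≤ k+1) =
      I.filter (fun i => i ≤ k) ∪ I.filter (fun i => i = k+1) := by
    rw [← Finset.filter_or]
    ext x
    simp only [Finset.mem_filter]
    constructor
    · rintro ⟨h1, h2⟩; exact ⟨h1, by omega⟩
    · rintro ⟨h1, h2⟩; exact ⟨h1, by omega⟩
  rw [hsplit, Finset.card_union_of_disjoint, Finset.filter_eq']
  · split
    · simp
    · simp
  · rw [Finset.disjoint_left]
    intro x hx hx'
    simp only [Finset.mem_filter] at hx hx'
    omega

lemma nc_le {m : ℕ} {J : Finset ℕ} (hJ : J ⊆ Finset.Icc 1 m) (k : ℕ) :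
    northCount J k ≤ k := by
  unfold northCount
  calc (J.filter (fun i => i ≤ k)).card ≤ (Finset.Icc 1 k).card := by
        apply Finset.card_le_card
        intro x hx
        simp only [Finset.mem_filter] at hx
        have := Finset.mem_Icc.mp (hJ hx.1)
        rw [Finset.mem_Icc]
        omega
    _ = k := by rw [Nat.card_Icc]; omega

lemma nc_card {m : ℕ} {J : Finset ℕ} (hJ : J ⊆ Finset.Icc 1 m) :
    northCount J m = J.card := by
  unfold northCount
  congr 1
  apply Finset.filter_true_of_mem
  intro x hx
  exact (Finset.mem_Icc.mp (hJ hx)).2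

lemma nc_mem {J : Finset ℕ} {k : ℕ} (hk : k ∈ J) : 1 ≤ northCount J k := by
  unfold northCount
  rw [Nat.one_le_iff_ne_zero, ← Nat.pos_iff_ne_zero, Finset.card_pos]
  exact ⟨k, Finset.mem_filter.mpr ⟨hk, le_rfl⟩⟩

lemma nc_Icc (u v k : ℕ) : northCount (Finset.Icc u v) k = min v k + 1 - u := by
  unfold northCount
  have : (Finset.Icc u v).filter (fun i => i ≤ k) = Finset.Icc u (min v k) := by
    ext x
    simp only [Finset.mem_filter, Finset.mem_Icc]
    omega
  rw [this, Nat.card_Icc]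

lemma nc_union {S T : Finset ℕ} (h : Disjoint S T) (k : ℕ) :
    northCount (S ∪ T) k = northCount S k + northCount T k := by
  unfold northCount
  rw [Finset.filter_union, Finset.card_union_of_disjoint (Finset.disjoint_filter_filter h)]

lemma nc_get {J : Finset ℕ} {t : ℕ} (ht : t < J.card) :
    northCount J ((sortedList J).getD t 0) = t + 1 := by
  unfold northCount
  have himg : J.filter (fun i => i ≤ (sortedList J).getD t 0) =
      (Finset.range (t+1)).image (fun s => (sortedList J).getD s 0) := by
    ext x
    simp only [Finset.mem_filter, Finset.mem_image, Finset.mem_range]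
    constructor
    · rintro ⟨hxJ, hxle⟩
      have hmem : x ∈ sortedList J := by
        unfold sortedList; rw [Finset.mem_sort]; exact hxJ
      obtain ⟨s, hslen, hsx⟩ := List.mem_iff_getElem.mp hmem
      have hsx' : (sortedList J).getD s 0 = x := by rw [List.getD_eq_getElem _ _ hslen, hsx]
      have hscard : s < J.card := by rwa [sortedList_length] at hslen
      refine ⟨s, ?_, hsx'⟩
      by_contra hst
      have : (sortedList J).getD t 0 < (sortedList J).getD s 0 :=
        sortedList_lt (by omega) hscard
      omega
    · rintro ⟨s, hs, rfl⟩
      exact ⟨sortedList_mem (by omega), sortedList_le (by omega) ht⟩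
  rw [himg, Finset.card_image_of_injOn, Finset.card_range]
  intro s hs s' hs' heq
  simp only [Finset.coe_range, Set.mem_Iio] at hs hs'
  dsimp only at heq
  by_contra hne
  rcases Nat.lt_or_ge s s' with h | h
  · have := sortedList_lt (I := J) h (by omega); omega
  · have := sortedList_lt (I := J) (show s' < s by omega) (by omega); omega

lemma InL_mono {m : ℕ} {A : Finset ℕ} {x y x' y' : ℕ} (h : InL m A x y)
    (hx : x' ≤ x) (hy : y' ≤ y) : InL m A x' y' := by
  obtain ⟨j, hj, h1, h2⟩ := h
  exact ⟨j, hj, by omega, by omega⟩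

/-! ### solid sets -/

lemma card_type1 (a b : ℕ) : (Finset.Icc (a+1) (a+b)).card = b := by
  rw [Nat.card_Icc]; omega

lemma type1_sub {m a b : ℕ} (hab : a + b ≤ m) : Finset.Icc (a+1) (a+b) ⊆ Finset.Icc 1 m := by
  intro x hx
  rw [Finset.mem_Icc] at hx ⊢
  omega

lemma getD_type1 {a b t : ℕ} (ht : t < b) :
    (sortedList (Finset.Icc (a+1) (a+b))).getD t 0 = a + 1 + t := by
  have hc : (Finset.Icc (a+1) (a+b)).card = b := card_type1 a b
  have htc : t < (Finset.Icc (a+1) (a+b)).card := by omega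
  have hmem := Finset.mem_Icc.mp (sortedList_mem htc)
  have hnc := nc_get htc
  rw [nc_Icc] at hnc
  omega

lemma type2_disj (a b m : ℕ) : Disjoint (Finset.Icc 1 a) (Finset.Icc (a+b+1) m) := by
  rw [Finset.disjoint_left]
  intro x hx hx'
  rw [Finset.mem_Icc] at hx hx'
  omega

lemma card_type2 {m a b : ℕ} (hab : a + b ≤ m) :
    (Finset.Icc 1 a ∪ Finset.Icc (a+b+1) m).card = m - b := by
  rw [Finset.card_union_of_disjoint (type2_disj a b m), Nat.card_Icc, Nat.card_Icc]
  omega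

lemma type2_sub {m a b : ℕ} (hab : a + b ≤ m) :
    Finset.Icc 1 a ∪ Finset.Icc (a+b+1) m ⊆ Finset.Icc 1 m := by
  intro x hx
  rw [Finset.mem_union, Finset.mem_Icc, Finset.mem_Icc] at hx
  rw [Finset.mem_Icc]
  omega

lemma nc_type2 (a b m k : ℕ) :
    northCount (Finset.Icc 1 a ∪ Finset.Icc (a+b+1) m) k =
      (min a k + 1 - 1) + (min m k + 1 - (a+b+1)) := by
  rw [nc_union (type2_disj a b m), nc_Icc, nc_Icc]

lemma getD_type2 {m a b t : ℕ} (hab : a + b ≤ m) (ht : t < m - b) :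
    (sortedList (Finset.Icc 1 a ∪ Finset.Icc (a+b+1) m)).getD t 0 =
      if t < a then t + 1 else t + b + 1 := by
  have hc := card_type2 (m := m) (a := a) (b := b) hab
  have htc : t < (Finset.Icc 1 a ∪ Finset.Icc (a+b+1) m).card := by omega
  have hmem := sortedList_mem htc
  rw [Finset.mem_union, Finset.mem_Icc, Finset.mem_Icc] at hmem
  have hnc := nc_get htc
  rw [nc_type2] at hnc
  split <;> omega

/-! ### constraints from the staircase -/

lemma constraint1 {m a b : ℕ} {A J : Finset ℕ} (hJ : J ⊆ Finset.Icc 1 m)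
    (hJL : PathInL m A J) (hnot : ¬ InL m A a (b+1)) {t : ℕ} (htb : b ≤ t)
    (ht : t < J.card) : (sortedList J).getD t 0 ≤ a + t := by
  set k := (sortedList J).getD t 0 with hk
  have hkm : k ≤ m := (Finset.mem_Icc.mp (hJ (sortedList_mem ht))).2
  have hnc := nc_get ht
  have h := hJL k hkm
  rw [hnc] at h
  by_contra hgt
  exact hnot (InL_mono h (by omega) (by omega))

lemma constraint2 {m a b : ℕ} {A J : Finset ℕ} (hJ : J ⊆ Finset.Icc 1 m)
    (hJL : PathInL m A J) (hnot : ¬ InL m A (b+1) a) {t : ℕ} (hta : a ≤ t + 1)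
    (ht : t < J.card) : (sortedList J).getD t 0 ≤ t + 1 + b := by
  set k := (sortedList J).getD t 0 with hk
  have hkm : k ≤ m := (Finset.mem_Icc.mp (hJ (sortedList_mem ht))).2
  have hnc := nc_get ht
  have h := hJL k hkm
  rw [hnc] at h
  by_contra hgt
  exact hnot (InL_mono h (by omega) (by omega))

lemma constraint3 {m a b : ℕ} {A J : Finset ℕ} (hJ : J ⊆ Finset.Icc 1 m)
    (hJL : PathInL m A J) (hnot : ¬ InL m A (b+1) a) (hq : J.card < m - b) :
    J.card < a := by
  by_contra hge
  have h := hJL m le_rfl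
  rw [nc_card hJ] at h
  exact hnot (InL_mono h (by omega) (by omega))

/-! ### non-kissing -/

lemma nonkissing_of_solid {m : ℕ} {A I J : Finset ℕ} (hI : I ⊆ Finset.Icc 1 m)
    (hJ : J ⊆ Finset.Icc 1 m) (hJL : PathInL m A J) (hsolid : Solid m A I) :
    PathsNonKissing m I J := by
  rintro k₁ k₂ ⟨hk1, hk12, hk2m, heq, hne1, hne2⟩
  have e1 : northCount I k₁ = northCount J k₁ := heq k₁ le_rfl hk12
  have e2 : northCount I k₂ = northCount J k₂ := heq k₂ hk12 le_rfl
  have hsub : k₁ - 1 + 1 = k₁ := by omega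
  have s1I := nc_succ I (k₁ - 1); rw [hsub] at s1I
  have s1J := nc_succ J (k₁ - 1); rw [hsub] at s1J
  have s2I := nc_succ I k₂
  have s2J := nc_succ J k₂
  have x1 : (k₁ ∈ I ∧ k₁ ∉ J) ∨ (k₁ ∉ I ∧ k₁ ∈ J) := by
    by_cases h1 : k₁ ∈ I <;> by_cases h2 : k₁ ∈ J <;>
      simp only [h1, h2, if_true, if_false] at s1I s1J <;> first | omega | (left; exact ⟨h1, h2⟩) | (right; exact ⟨h1, h2⟩)
  have x2 : (k₂+1 ∈ I ∧ k₂+1 ∉ J) ∨ (k₂+1 ∉ I ∧ k₂+1 ∈ J) := by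
    by_cases h1 : k₂+1 ∈ I <;> by_cases h2 : k₂+1 ∈ J <;>
      simp only [h1, h2, if_true, if_false] at s2I s2J <;> first | omega | (left; exact ⟨h1, h2⟩) | (right; exact ⟨h1, h2⟩)
  rcases x1 with ⟨h1I, h1J⟩ | ⟨h1I, h1J⟩ <;> rcases x2 with ⟨h2I, h2J⟩ | ⟨h2I, h2J⟩
  · exact iff_of_true h1I h2I
  · -- kiss A : k₁ ∈ I, k₂+1 ∉ I (and k₂+1 ∈ J)
    exfalso
    rcases hsolid with ⟨a, b, hab, hIeq, hnot⟩ | ⟨a, b, hab, hIeq, hnot⟩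
    · subst hIeq
      have hm1 := Finset.mem_Icc.mp h1I
      have hm2 : ¬ (a+1 ≤ k₂+1 ∧ k₂+1 ≤ a+b) := fun h => h2I (Finset.mem_Icc.mpr h)
      have hk2ab : a + b ≤ k₂ := by omega
      have hncI : northCount (Finset.Icc (a+1) (a+b)) k₂ = b := by rw [nc_Icc]; omega
      have hncJ : northCount J (k₂+1) = b + 1 := by
        rw [s2J, if_pos h2J]; omega
      have h := hJL (k₂+1) (by omega)
      rw [hncJ] at h
      exact hnot (InL_mono h (by omega) (by omega))
    · subst hIeq
      rw [Finset.mem_union, Finset.mem_Icc, Finset.mem_Icc] at h1I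
      rcases h1I with h1I | h1I
      · -- k₁ ≤ a
        have hncI : northCount (Finset.Icc 1 a ∪ Finset.Icc (a+b+1) m) k₁ = k₁ := by
          rw [nc_type2]; omega
        have hJk1 : northCount J k₁ ≤ k₁ - 1 := by
          rw [s1J, if_neg h1J]
          have := nc_le hJ (k₁ - 1)
          omega
        omega
      · -- k₁ ≥ a+b+1 : then k₂+1 ∈ I, contradiction
        apply h2I
        rw [Finset.mem_union, Finset.mem_Icc, Finset.mem_Icc]
        right
        omega
  · -- kiss B : k₁ ∉ I (k₁ ∈ J), k₂+1 ∈ I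
    exfalso
    rcases hsolid with ⟨a, b, hab, hIeq, hnot⟩ | ⟨a, b, hab, hIeq, hnot⟩
    · subst hIeq
      have hm2 := Finset.mem_Icc.mp h2I
      have hm1 : ¬ (a+1 ≤ k₁ ∧ k₁ ≤ a+b) := fun h => h1I (Finset.mem_Icc.mpr h)
      have hk1a : k₁ ≤ a := by omega
      have hncI : northCount (Finset.Icc (a+1) (a+b)) k₁ = 0 := by rw [nc_Icc]; omega
      have := nc_mem h1J
      omega
    · subst hIeq
      rw [Finset.mem_union, Finset.mem_Icc, Finset.mem_Icc] at h2I
      have hm1 : ¬ (1 ≤ k₁ ∧ k₁ ≤ a) ∧ ¬ (a+b+1 ≤ k₁ ∧ k₁ ≤ m) := by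
        constructor <;> intro h <;>
          exact h1I (by rw [Finset.mem_union, Finset.mem_Icc, Finset.mem_Icc]; tauto)
      have hk1r : a + 1 ≤ k₁ ∧ k₁ ≤ a + b := by omega
      have hk2ab : a + b ≤ k₂ := by omega
      have hncI : northCount (Finset.Icc 1 a ∪ Finset.Icc (a+b+1) m) k₂ = k₂ - b := by
        rw [nc_type2]; omega
      have hncJ : northCount J (k₂+1) = k₂ - b := by
        rw [s2J, if_neg h2J]; omega
      have h := hJL (k₂+1) (by omega)
      rw [hncJ] at h
      exact hnot (InL_mono h (by omega) (by omega))
  · exact iff_of_false h1I h2I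

/-! ### non-crossing branches -/

lemma branch1 {m a b : ℕ} {A J : Finset ℕ} (hab : a + b ≤ m) (hJ : J ⊆ Finset.Icc 1 m)
    (hJL : PathInL m A J) (hnot : ¬ InL m A a (b+1)) (hbq : b ≤ J.card) :
    ListsNonCrossing (sortedList (Finset.Icc (a+1) (a+b))) (sortedList J) := by
  set P := sortedList (Finset.Icc (a+1) (a+b)) with hP
  set Q := sortedList J with hQ
  have hPlen : P.length = b := by rw [hP, sortedList_length, card_type1]
  have hQlen : Q.length = J.card := by rw [hQ, sortedList_length]
  have vP : ∀ t, t < b → P.getD t 0 = a + 1 + t := by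
    intro t ht; rw [hP]; exact getD_type1 ht
  have vQlt : ∀ {s t : ℕ}, s < t → t < J.card → Q.getD s 0 < Q.getD t 0 := by
    intro s t h1 h2; exact sortedList_lt h1 h2
  have vC : ∀ t, b ≤ t → t < J.card → Q.getD t 0 ≤ a + t := by
    intro t h1 h2; exact constraint1 hJ hJL hnot h1 h2
  intro s hs
  obtain ⟨c, f, hc, hf, hiP, hiQ, hl2, E1, E2, hmid⟩ := strip_spec P Q
  simp only [hPlen, hQlen] at hiP hiQ hl2 E1 E2 hmid
  rw [hl2] at hs
  have hmono : f s < f (s+1) := hf (by omega)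
  have hfs1Q : f (s+1) < J.card := (hiQ (s+1)).mpr hs
  have hfsQ : f s < J.card := (hiQ s).mpr (by omega)
  rw [E1 s, E1 (s+1), E2 s, E2 (s+1), if_pos (show s < J.card - c by omega),
    if_pos (show s + 1 < J.card - c from hs)]
  by_cases hv : s + 1 < b - c
  · have hu : s < b - c := by omega
    have hfs1b : f (s+1) < b := (hiP (s+1)).mpr hv
    have hfsb : f s < b := (hiP s).mpr hu
    rw [if_pos hu, if_pos hv]
    constructor
    · rintro ⟨hA, hB, hC⟩
      have hA' : Q.getD (f s) 0 < P.getD (f s) 0 := by exact_mod_cast hA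
      have hB' : P.getD (f s) 0 < Q.getD (f (s+1)) 0 := by exact_mod_cast hB
      have hC' : Q.getD (f (s+1)) 0 < P.getD (f (s+1)) 0 := by exact_mod_cast hC
      have e1 := vP _ hfsb
      have e2 := vP _ hfs1b
      rcases Nat.lt_or_ge (f s + 1) (f (s+1)) with hgap | hgap
      · obtain ⟨hm, hmb, hmq⟩ := hmid s (f (s+1) - 1) (by omega) (by omega)
        have e3 := vP _ (show f (s+1) - 1 < b by omega)
        have hQstep : Q.getD (f (s+1) - 1) 0 < Q.getD (f (s+1)) 0 := vQlt (by omega) hfs1Q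
        omega
      · omega
    · rintro ⟨hA, hB, hC⟩
      have hA' : P.getD (f s) 0 < Q.getD (f s) 0 := by exact_mod_cast hA
      have hB' : Q.getD (f s) 0 < P.getD (f (s+1)) 0 := by exact_mod_cast hB
      have e1 := vP _ hfsb
      have e2 := vP _ hfs1b
      rcases Nat.lt_or_ge (f s + 1) (f (s+1)) with hgap | hgap
      · obtain ⟨hm, hmb, hmq⟩ := hmid s (f s + 1) (by omega) (by omega)
        have e3 := vP _ (show f s + 1 < b by omega)
        have hQstep : Q.getD (f s) 0 < Q.getD (f s + 1) 0 := vQlt (by omega) (by omega)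
        omega
      · omega
  · by_cases hu : s < b - c
    · have hfsb : f s < b := (hiP s).mpr hu
      have hfs1b : b ≤ f (s+1) := by
        by_contra h; exact hv ((hiP (s+1)).mp (by omega))
      rw [if_pos hu, if_neg hv]
      constructor
      · rintro ⟨hA, hB, hC⟩
        have hA' : Q.getD (f s) 0 < P.getD (f s) 0 := by exact_mod_cast hA
        have hB' : P.getD (f s) 0 < Q.getD (f (s+1)) 0 := by exact_mod_cast hB
        have e1 := vP _ hfsb
        have hcons : Q.getD (f (s+1)) 0 ≤ a + f (s+1) := vC _ (by omega) hfs1Q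
        rcases Nat.lt_or_ge (f s + 1) (f (s+1)) with hgap | hgap
        · obtain ⟨hm, hmb, hmq⟩ := hmid s (f (s+1) - 1) (by omega) (by omega)
          have e3 := vP _ (show f (s+1) - 1 < b by omega)
          have hQstep : Q.getD (f (s+1) - 1) 0 < Q.getD (f (s+1)) 0 := vQlt (by omega) hfs1Q
          omega
        · omega
      · rintro ⟨hA, hB, hC⟩
        exact absurd hC not_top_lt
    · rw [if_neg hu, if_neg hv]
      constructor
      · rintro ⟨hA, hB, hC⟩
        exact absurd hB not_top_lt
      · rintro ⟨hA, hB, hC⟩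
        exact absurd hA not_top_lt

lemma branch2 {m a b : ℕ} {A J : Finset ℕ} (hab : a + b ≤ m) (hJ : J ⊆ Finset.Icc 1 m)
    (hJL : PathInL m A J) (hnot : ¬ InL m A a (b+1)) (hqb : J.card < b) :
    ListsNonCrossing (sortedList J) (sortedList (Finset.Icc (a+1) (a+b))) := by
  set P := sortedList J with hP
  set Q := sortedList (Finset.Icc (a+1) (a+b)) with hQ
  have hPlen : P.length = J.card := by rw [hP, sortedList_length]
  have hQlen : Q.length = b := by rw [hQ, sortedList_length, card_type1]
  have vQ : ∀ t, t < b → Q.getD t 0 = a + 1 + t := by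
    intro t ht; rw [hQ]; exact getD_type1 ht
  have vPlt : ∀ {s t : ℕ}, s < t → t < J.card → P.getD s 0 < P.getD t 0 := by
    intro s t h1 h2; exact sortedList_lt h1 h2
  intro s hs
  obtain ⟨c, f, hc, hf, hiP, hiQ, hl2, E1, E2, hmid⟩ := strip_spec P Q
  simp only [hPlen, hQlen] at hiP hiQ hl2 E1 E2 hmid
  rw [hl2] at hs
  have hmono : f s < f (s+1) := hf (by omega)
  have hfs1b : f (s+1) < b := (hiQ (s+1)).mpr hs
  have hfsb : f s < b := (hiQ s).mpr (by omega)
  rw [E1 s, E1 (s+1), E2 s, E2 (s+1), if_pos (show s < b - c by omega),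
    if_pos (show s + 1 < b - c from hs)]
  have eQ1 := vQ _ hfsb
  have eQ2 := vQ _ hfs1b
  by_cases hv : s + 1 < J.card - c
  · have hu : s < J.card - c := by omega
    have hfs1q : f (s+1) < J.card := (hiP (s+1)).mpr hv
    have hfsq : f s < J.card := (hiP s).mpr hu
    rw [if_pos hu, if_pos hv]
    constructor
    · rintro ⟨hA, hB, hC⟩
      have hA' : Q.getD (f s) 0 < P.getD (f s) 0 := by exact_mod_cast hA
      have hB' : P.getD (f s) 0 < Q.getD (f (s+1)) 0 := by exact_mod_cast hB
      rcases Nat.lt_or_ge (f s + 1) (f (s+1)) with hgap | hgap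
      · obtain ⟨hm, hmq, hmb⟩ := hmid s (f s + 1) (by omega) (by omega)
        have e3 := vQ _ (show f s + 1 < b by omega)
        have hPstep : P.getD (f s) 0 < P.getD (f s + 1) 0 := vPlt (by omega) (by omega)
        omega
      · omega
    · rintro ⟨hA, hB, hC⟩
      have hA' : P.getD (f s) 0 < Q.getD (f s) 0 := by exact_mod_cast hA
      have hB' : Q.getD (f s) 0 < P.getD (f (s+1)) 0 := by exact_mod_cast hB
      have hC' : P.getD (f (s+1)) 0 < Q.getD (f (s+1)) 0 := by exact_mod_cast hC
      rcases Nat.lt_or_ge (f s + 1) (f (s+1)) with hgap | hgap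
      · obtain ⟨hm, hmq, hmb⟩ := hmid s (f (s+1) - 1) (by omega) (by omega)
        have e3 := vQ _ (show f (s+1) - 1 < b by omega)
        have hPstep : P.getD (f (s+1) - 1) 0 < P.getD (f (s+1)) 0 := vPlt (by omega) hfs1q
        omega
      · omega
  · by_cases hu : s < J.card - c
    · have hfsq : f s < J.card := (hiP s).mpr hu
      have hfs1q : J.card ≤ f (s+1) := by
        by_contra h; exact hv ((hiP (s+1)).mp (by omega))
      rw [if_pos hu, if_neg hv]
      constructor
      · rintro ⟨hA, hB, hC⟩
        have hA' : Q.getD (f s) 0 < P.getD (f s) 0 := by exact_mod_cast hA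
        have hB' : P.getD (f s) 0 < Q.getD (f (s+1)) 0 := by exact_mod_cast hB
        rcases Nat.lt_or_ge (f s + 1) (f (s+1)) with hgap | hgap
        · obtain ⟨hm, hmq, hmb⟩ := hmid s (f s + 1) (by omega) (by omega)
          have e3 := vQ _ (show f s + 1 < b by omega)
          have hPstep : P.getD (f s) 0 < P.getD (f s + 1) 0 := vPlt (by omega) (by omega)
          omega
        · omega
      · rintro ⟨hA, hB, hC⟩
        exact absurd hC not_top_lt
    · rw [if_neg hu, if_neg hv]
      constructor
      · rintro ⟨hA, hB, hC⟩
        exact absurd hB not_top_lt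
      · rintro ⟨hA, hB, hC⟩
        exact absurd hA not_top_lt

lemma branch3 {m a b : ℕ} {A J : Finset ℕ} (hab : a + b ≤ m) (hJ : J ⊆ Finset.Icc 1 m)
    (hJL : PathInL m A J) (hnot : ¬ InL m A (b+1) a) (hpq : m - b ≤ J.card) :
    ListsNonCrossing (sortedList (Finset.Icc 1 a ∪ Finset.Icc (a+b+1) m)) (sortedList J) := by
  set P := sortedList (Finset.Icc 1 a ∪ Finset.Icc (a+b+1) m) with hP
  set Q := sortedList J with hQ
  have hPlen : P.length = m - b := by rw [hP, sortedList_length, card_type2 hab]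
  have hQlen : Q.length = J.card := by rw [hQ, sortedList_length]
  have vlow : ∀ t, t < a → t < m - b → P.getD t 0 = t + 1 := by
    intro t h1 h2; rw [hP, getD_type2 hab h2, if_pos h1]
  have vhigh : ∀ t, a ≤ t → t < m - b → P.getD t 0 = t + b + 1 := by
    intro t h1 h2; rw [hP, getD_type2 hab h2, if_neg (by omega)]
  have vQlt : ∀ {s t : ℕ}, s < t → t < J.card → Q.getD s 0 < Q.getD t 0 := by
    intro s t h1 h2; exact sortedList_lt h1 h2
  have vQlb : ∀ t, t < J.card → t + 1 ≤ Q.getD t 0 := by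
    intro t ht; exact sortedList_lb hJ ht
  have vQub : ∀ t, t < J.card → Q.getD t 0 ≤ m := by
    intro t ht; exact sortedList_ub hJ ht
  have vC : ∀ t, a ≤ t + 1 → t < J.card → Q.getD t 0 ≤ t + 1 + b := by
    intro t h1 h2; exact constraint2 hJ hJL hnot h1 h2
  intro s hs
  obtain ⟨c, f, hc, hf, hiP, hiQ, hl2, E1, E2, hmid⟩ := strip_spec P Q
  simp only [hPlen, hQlen] at hiP hiQ hl2 E1 E2 hmid
  rw [hl2] at hs
  have hmono : f s < f (s+1) := hf (by omega)
  have hfs1Q : f (s+1) < J.card := (hiQ (s+1)).mpr hs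
  have hfsQ : f s < J.card := (hiQ s).mpr (by omega)
  rw [E1 s, E1 (s+1), E2 s, E2 (s+1), if_pos (show s < J.card - c by omega),
    if_pos (show s + 1 < J.card - c from hs)]
  by_cases hv : s + 1 < (m - b) - c
  · have hu : s < (m - b) - c := by omega
    have hfs1p : f (s+1) < m - b := (hiP (s+1)).mpr hv
    have hfsp : f s < m - b := (hiP s).mpr hu
    rw [if_pos hu, if_pos hv]
    constructor
    · rintro ⟨hA, hB, hC⟩
      have hA' : Q.getD (f s) 0 < P.getD (f s) 0 := by exact_mod_cast hA
      have hB' : P.getD (f s) 0 < Q.getD (f (s+1)) 0 := by exact_mod_cast hB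
      have hC' : Q.getD (f (s+1)) 0 < P.getD (f (s+1)) 0 := by exact_mod_cast hC
      have hlb := vQlb _ hfsQ
      rcases Nat.lt_or_ge (f s) a with hfa | hfa
      · have e1 := vlow _ hfa hfsp
        omega
      · have e1 := vhigh _ hfa hfsp
        have e2 := vhigh _ (by omega) hfs1p
        rcases Nat.lt_or_ge (f s + 1) (f (s+1)) with hgap | hgap
        · obtain ⟨hm, hmp, hmq⟩ := hmid s (f (s+1) - 1) (by omega) (by omega)
          have e3 := vhigh _ (show a ≤ f (s+1) - 1 by omega) (by omega)
          have hQstep : Q.getD (f (s+1) - 1) 0 < Q.getD (f (s+1)) 0 := vQlt (by omega) hfs1Q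
          omega
        · omega
    · rintro ⟨hA, hB, hC⟩
      have hA' : P.getD (f s) 0 < Q.getD (f s) 0 := by exact_mod_cast hA
      have hB' : Q.getD (f s) 0 < P.getD (f (s+1)) 0 := by exact_mod_cast hB
      have hC' : P.getD (f (s+1)) 0 < Q.getD (f (s+1)) 0 := by exact_mod_cast hC
      rcases Nat.lt_or_ge (f (s+1)) a with hfa | hfa
      · have e1 := vlow _ (by omega) hfsp
        have e2 := vlow _ hfa hfs1p
        rcases Nat.lt_or_ge (f s + 1) (f (s+1)) with hgap | hgap
        · obtain ⟨hm, hmp, hmq⟩ := hmid s (f s + 1) (by omega) (by omega)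
          have e3 := vlow (f s + 1) (by omega) (by omega)
          have hQstep : Q.getD (f s) 0 < Q.getD (f s + 1) 0 := vQlt (by omega) (by omega)
          omega
        · omega
      · have e2 := vhigh _ hfa hfs1p
        have hcons := vC (f (s+1)) (by omega) hfs1Q
        omega
  · by_cases hu : s < (m - b) - c
    · have hfsp : f s < m - b := (hiP s).mpr hu
      have hfs1p : m - b ≤ f (s+1) := by
        by_contra h; exact hv ((hiP (s+1)).mp (by omega))
      rw [if_pos hu, if_neg hv]
      constructor
      · rintro ⟨hA, hB, hC⟩
        have hA' : Q.getD (f s) 0 < P.getD (f s) 0 := by exact_mod_cast hA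
        have hB' : P.getD (f s) 0 < Q.getD (f (s+1)) 0 := by exact_mod_cast hB
        have hlb := vQlb _ hfsQ
        have hub := vQub _ hfs1Q
        rcases Nat.lt_or_ge (f s) a with hfa | hfa
        · have e1 := vlow _ hfa hfsp
          omega
        · have e1 := vhigh _ hfa hfsp
          rcases Nat.lt_or_ge (f s + 1) (f (s+1)) with hgap | hgap
          · obtain ⟨hm, hmp, hmq⟩ := hmid s (f (s+1) - 1) (by omega) (by omega)
            have e3 := vhigh _ (show a ≤ f (s+1) - 1 by omega) (by omega)
            have hQstep : Q.getD (f (s+1) - 1) 0 < Q.getD (f (s+1)) 0 := vQlt (by omega) hfs1Q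
            omega
          · omega
      · rintro ⟨hA, hB, hC⟩
        exact absurd hC not_top_lt
    · rw [if_neg hu, if_neg hv]
      constructor
      · rintro ⟨hA, hB, hC⟩
        exact absurd hB not_top_lt
      · rintro ⟨hA, hB, hC⟩
        exact absurd hA not_top_lt

lemma branch4 {m a b : ℕ} {A J : Finset ℕ} (hab : a + b ≤ m) (hJ : J ⊆ Finset.Icc 1 m)
    (hJL : PathInL m A J) (hnot : ¬ InL m A (b+1) a) (hqp : J.card < m - b) :
    ListsNonCrossing (sortedList J) (sortedList (Finset.Icc 1 a ∪ Finset.Icc (a+b+1) m)) := by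
  have hqa : J.card < a := constraint3 hJ hJL hnot hqp
  set P := sortedList J with hP
  set Q := sortedList (Finset.Icc 1 a ∪ Finset.Icc (a+b+1) m) with hQ
  have hPlen : P.length = J.card := by rw [hP, sortedList_length]
  have hQlen : Q.length = m - b := by rw [hQ, sortedList_length, card_type2 hab]
  have vlow : ∀ t, t < a → t < m - b → Q.getD t 0 = t + 1 := by
    intro t h1 h2; rw [hQ, getD_type2 hab h2, if_pos h1]
  have vPlt : ∀ {s t : ℕ}, s < t → t < J.card → P.getD s 0 < P.getD t 0 := by
    intro s t h1 h2; exact sortedList_lt h1 h2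
  have vPlb : ∀ t, t < J.card → t + 1 ≤ P.getD t 0 := by
    intro t ht; exact sortedList_lb hJ ht
  intro s hs
  obtain ⟨c, f, hc, hf, hiP, hiQ, hl2, E1, E2, hmid⟩ := strip_spec P Q
  simp only [hPlen, hQlen] at hiP hiQ hl2 E1 E2 hmid
  rw [hl2] at hs
  have hmono : f s < f (s+1) := hf (by omega)
  have hfs1p : f (s+1) < m - b := (hiQ (s+1)).mpr hs
  have hfsp : f s < m - b := (hiQ s).mpr (by omega)
  rw [E1 s, E1 (s+1), E2 s, E2 (s+1), if_pos (show s < (m - b) - c by omega),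
    if_pos (show s + 1 < (m - b) - c from hs)]
  by_cases hv : s + 1 < J.card - c
  · have hu : s < J.card - c := by omega
    have hfs1q : f (s+1) < J.card := (hiP (s+1)).mpr hv
    have hfsq : f s < J.card := (hiP s).mpr hu
    rw [if_pos hu, if_pos hv]
    constructor
    · rintro ⟨hA, hB, hC⟩
      have hA' : Q.getD (f s) 0 < P.getD (f s) 0 := by exact_mod_cast hA
      have hB' : P.getD (f s) 0 < Q.getD (f (s+1)) 0 := by exact_mod_cast hB
      have e1 := vlow _ (by omega) hfsp
      have e2 := vlow _ (by omega) hfs1p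
      rcases Nat.lt_or_ge (f s + 1) (f (s+1)) with hgap | hgap
      · obtain ⟨hm, hmq, hmp⟩ := hmid s (f s + 1) (by omega) (by omega)
        have e3 := vlow (f s + 1) (by omega) (by omega)
        have hPstep : P.getD (f s) 0 < P.getD (f s + 1) 0 := vPlt (by omega) (by omega)
        omega
      · omega
    · rintro ⟨hA, hB, hC⟩
      have hA' : P.getD (f s) 0 < Q.getD (f s) 0 := by exact_mod_cast hA
      have e1 := vlow _ (by omega) hfsp
      have hlb := vPlb _ hfsq
      omega
  · by_cases hu : s < J.card - c
    · have hfsq : f s < J.card := (hiP s).mpr hu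
      have hfs1q : J.card ≤ f (s+1) := by
        by_contra h; exact hv ((hiP (s+1)).mp (by omega))
      rw [if_pos hu, if_neg hv]
      constructor
      · rintro ⟨hA, hB, hC⟩
        have hA' : Q.getD (f s) 0 < P.getD (f s) 0 := by exact_mod_cast hA
        have hB' : P.getD (f s) 0 < Q.getD (f (s+1)) 0 := by exact_mod_cast hB
        have e1 := vlow _ (by omega) hfsp
        rcases Nat.lt_or_ge (f s + 1) (f (s+1)) with hgap | hgap
        · obtain ⟨hm, hmq, hmp⟩ := hmid s (f s + 1) (by omega) (by omega)
          have e3 := vlow (f s + 1) (by omega) (by omega)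
          have hPstep : P.getD (f s) 0 < P.getD (f s + 1) 0 := vPlt (by omega) (by omega)
          omega
        · have e2 := vlow _ (by omega) hfs1p
          omega
      · rintro ⟨hA, hB, hC⟩
        exact absurd hC not_top_lt
    · rw [if_neg hu, if_neg hv]
      constructor
      · rintro ⟨hA, hB, hC⟩
        exact absurd hB not_top_lt
      · rintro ⟨hA, hB, hC⟩
        exact absurd hA not_top_lt

/-- A solid path in a partial staircase `L` is non-kissing with every other monotone
lattice path contained in `L`; equivalently, the corresponding solid subset is
non-crossing with every element of `2^[m]_L`. -/
theorem solid_nonKissing (m : ℕ) (A : Finset ℕ) (hA : A ⊆ Finset.range (m+1))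
    (I J : Finset ℕ) (hI : I ⊆ Finset.Icc 1 m) (hJ : J ⊆ Finset.Icc 1 m)
    (hIL : PathInL m A I) (hJL : PathInL m A J) (hsolid : Solid m A I) :
    PathsNonKissing m I J ∧ SetsNonCrossing I J := by
  refine ⟨nonkissing_of_solid hI hJ hJL hsolid, ?_⟩
  unfold SetsNonCrossing
  rcases hsolid with ⟨a, b, hab, hIeq, hnot⟩ | ⟨a, b, hab, hIeq, hnot⟩
  · subst hIeq
    rw [card_type1]
    by_cases hbq : b ≤ J.card
    · rw [if_pos hbq]
      exact branch1 hab hJ hJL hnot hbq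
    · rw [if_neg hbq]
      exact branch2 hab hJ hJL hnot (by omega)
  · subst hIeq
    rw [card_type2 hab]
    by_cases hpq : m - b ≤ J.card
    · rw [if_pos hpq]
      exact branch3 hab hJ hJL hnot hpq
    · rw [if_neg hpq]
      exact branch4 hab hJ hJL hnot (by omega)
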